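/- If u, v, w are words over an alphabet A with |u| ≤ |w|, then in the queue monoid, the action sequence u followed by reading v followed by reading w is equivalent to reading v, then writing u, then reading w; i.e., u v̄ w̄ ≡ v̄ u w̄, where v̄ denotes the sequence of read actions for v. -/

import Mathlib

/-- One-step action of a queue symbol (`Sum.inl a` = write `a`, `Sum.inr a` = read `a`)
on a queue state (`none` = error state ⊥). -/
def qstep (A : Type) [DecidableEq A] : Option (List A) → A ⊕ A → Option (List A)
  | none, _ => none
  | some q, Sum.inl a => some (q ++ [a])
  | some q, Sum.inr a =>
      match q with
      | [] => none
      | b :: q' => if b = a then some q' else none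

/-- Action of a word of queue operations on a queue state. -/
def qact (A : Type) [DecidableEq A] (q : Option (List A)) (u : List (A ⊕ A)) :
    Option (List A) :=
  u.foldl (qstep A) q

/-- Equivalence of action sequences: same effect on every queue state. -/
def QEquiv (A : Type) [DecidableEq A] (u v : List (A ⊕ A)) : Prop :=
  ∀ q : Option (List A), qact A q u = qact A q v

/-- The sequence of write actions of a word. -/
def wr {A : Type} (u : List A) : List (A ⊕ A) := u.map Sum.inl

/-- The sequence of read actions of a word. -/
def rd {A : Type} (u : List A) : List (A ⊕ A) := u.map Sum.inr

section Aux

variable (A : Type) [DecidableEq A]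

lemma qact_none (u : List (A ⊕ A)) : qact A none u = none := by
  induction u with
  | nil => rfl
  | cons a u ih => simpa [qact, qstep] using ih

lemma qact_append (q : Option (List A)) (u v : List (A ⊕ A)) :
    qact A q (u ++ v) = qact A (qact A q u) v := List.foldl_append

lemma wr_act (s u : List A) : qact A (some s) (wr u) = some (s ++ u) := by
  induction u generalizing s with
  | nil => simp [qact, wr]
  | cons a u ih =>
    show qact A (qstep A (some s) (Sum.inl a)) (wr u) = _
    simp [qstep, ih]

lemma rd_act (s v : List A) :
    qact A (some s) (rd v) = if v <+: s then some (s.drop v.length) else none := by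
  induction v generalizing s with
  | nil => simp [qact, rd]
  | cons a v ih =>
    cases s with
    | nil =>
      show qact A (qstep A (some []) (Sum.inr a)) (rd v) = _
      simp [qstep, qact_none]
    | cons b s =>
      show qact A (qstep A (some (b :: s)) (Sum.inr a)) (rd v) = _
      by_cases hb : b = a
      · subst hb
        simp [qstep, ih, List.cons_prefix_cons]
      · simp [qstep, hb, qact_none, List.cons_prefix_cons, Ne.symm hb]

end Aux

/-- If `|u| ≤ |w|` then `u v̄ w̄ ≡ v̄ u w̄` in the queue monoid. -/
theorem stmt0 (A : Type) [DecidableEq A] (u v w : List A)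
    (h : u.length ≤ w.length) :
    QEquiv A (wr u ++ rd v ++ rd w) (rd v ++ wr u ++ rd w) := by
  intro q
  cases q with
  | none => simp [qact_none]
  | some s =>
    simp only [qact_append]
    rw [wr_act, rd_act, rd_act]
    by_cases hv : v <+: s
    · have hvs : v <+: s ++ u := hv.trans (List.prefix_append s u)
      rw [if_pos hv, if_pos hvs, wr_act, List.drop_append_of_le_length hv.length_le]
    · rw [if_neg hv, qact_none]
      by_cases hvu : v <+: s ++ u
      · rw [if_pos hvu, rd_act]
        have hlen : s.length < v.length := by
          by_contra hl; push_neg at hl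
          exact hv (List.prefix_of_prefix_length_le hvu (List.prefix_append s u) hl)
        have hnw : ¬ w <+: (s ++ u).drop v.length := by
          intro hw
          have h1 := hw.length_le
          have h2 := hvu.length_le
          simp [List.length_drop] at h1 h2
          omega
        rw [if_neg hnw, qact_none]
      · rw [if_neg hvu, qact_none]
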